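/- Let α, β, γ_0 ∈ ℂ with α ≠ 0 and γ_0 ≠ 0, and let γ_k be the k-th derivative at 0 of the entire function z ↦ γ_0 · exp(−(α/2)z² − βz). Define P_n(x) = Σ_{k=0}^n (γ_k/k!) D^k[x^n]. Then P_0(x) = γ_0, P_1(x) = (x − β)γ_0, and for all n ≥ 2, P_n(x) = (x − β)P_{n−1}(x) − α(n−1)P_{n−2}(x). -/

import Mathlib

open Polynomial Finset

private lemma iterD_X_mul (k : ℕ) (q : Polynomial ℂ) :
    Polynomial.derivative^[k+1] (Polynomial.X * q)
      = Polynomial.X * Polynomial.derivative^[k+1] q + (k+1 : ℕ) • Polynomial.derivative^[k] q := by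
  induction k with
  | zero => simp [Polynomial.derivative_mul, one_smul, add_comm]
  | succ k ih =>
      rw [Function.iterate_succ_apply', ih, derivative_add, derivative_mul,
        Polynomial.derivative_smul, Polynomial.derivative_X, one_mul,
        ← Function.iterate_succ_apply' Polynomial.derivative (k+1) q,
        ← Function.iterate_succ_apply' Polynomial.derivative k q]
      module

private lemma deriv_aff (a b c : ℂ) (u v : ℂ → ℂ) (hu : Differentiable ℂ u)
    (hv : Differentiable ℂ v) (z : ℂ) :
    deriv (fun z => (a * z - b) * u z - c * v z) z
      = a * u z + (a * z - b) * deriv u z - c * deriv v z := by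
  have h1 : HasDerivAt (fun z : ℂ => (a * z - b) * u z)
      (a * u z + (a * z - b) * deriv u z) z := by
    have h2 : HasDerivAt (fun z : ℂ => a * z - b) a z := by
      simpa using ((hasDerivAt_id z).const_mul a).sub_const b
    exact h2.mul (hu z).hasDerivAt
  exact (h1.sub ((hv z).hasDerivAt.const_mul c)).deriv

private lemma deriv_f (α β γ₀ : ℂ) (z : ℂ) :
    deriv (fun z : ℂ => γ₀ * Complex.exp (-(α / 2) * z ^ 2 - β * z)) z
      = (-α * z - β) * (γ₀ * Complex.exp (-(α / 2) * z ^ 2 - β * z)) := by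
  have hg : HasDerivAt (fun z : ℂ => -(α / 2) * z ^ 2 - β * z) (-α * z - β) z := by
    have h1 : HasDerivAt (fun z : ℂ => z ^ 2) (2 * z) z := by
      simpa using hasDerivAt_pow 2 z
    have := ((h1.const_mul (-(α/2))).sub ((hasDerivAt_id z).const_mul β))
    rw [show -α * z - β = -(α/2) * (2 * z) - β * 1 by ring]
    exact this
  rw [(hg.cexp.const_mul γ₀).deriv]
  ring

private lemma iter_rec (α β γ₀ : ℂ) (k : ℕ) :
    iteratedDeriv (k+1) (fun z : ℂ => γ₀ * Complex.exp (-(α / 2) * z ^ 2 - β * z))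
      = fun z => (-α * z - β) *
            iteratedDeriv k (fun z : ℂ => γ₀ * Complex.exp (-(α / 2) * z ^ 2 - β * z)) z
          - (α * k) *
            iteratedDeriv (k-1) (fun z : ℂ => γ₀ * Complex.exp (-(α / 2) * z ^ 2 - β * z)) z := by
  set f : ℂ → ℂ := fun z : ℂ => γ₀ * Complex.exp (-(α / 2) * z ^ 2 - β * z) with hf
  have hcd : ContDiff ℂ ⊤ f :=
    contDiff_const.mul
      (((contDiff_const.mul (contDiff_id.pow 2)).sub (contDiff_const.mul contDiff_id)).cexp)
  have hdiff : ∀ j : ℕ, Differentiable ℂ (iteratedDeriv j f) := fun j =>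
    hcd.differentiable_iteratedDeriv j (by simp)
  induction k with
  | zero =>
      funext z
      rw [iteratedDeriv_succ, iteratedDeriv_zero]
      simp only [Nat.cast_zero, mul_zero, zero_mul, sub_zero]
      exact deriv_f α β γ₀ z
  | succ k ih =>
      funext z
      have e1 : deriv (iteratedDeriv k f) z = iteratedDeriv (k+1) f z := by
        rw [← iteratedDeriv_succ]
      have e2 : deriv (iteratedDeriv (k-1) f) z = iteratedDeriv (k-1+1) f z := by
        rw [← iteratedDeriv_succ]
      calc iteratedDeriv (k+1+1) f z
          = deriv (iteratedDeriv (k+1) f) z := by rw [iteratedDeriv_succ]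
        _ = deriv (fun z => (-α * z - β) * iteratedDeriv k f z
              - (α * k) * iteratedDeriv (k-1) f z) z := by rw [ih]
        _ = -α * iteratedDeriv k f z + (-α * z - β) * deriv (iteratedDeriv k f) z
              - (α * k) * deriv (iteratedDeriv (k-1) f) z :=
            deriv_aff (-α) β (α * k) _ _ (hdiff k) (hdiff (k-1)) z
        _ = (-α * z - β) * iteratedDeriv (k+1) f z
              - α * ((k+1 : ℕ) : ℂ) * iteratedDeriv (k+1-1) f z := by
            rw [e1, e2]
            rcases Nat.eq_zero_or_pos k with hk | hk
            · subst hk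
              show -α * iteratedDeriv 0 f z + (-α * z - β) * iteratedDeriv 1 f z
                    - α * ((0:ℕ):ℂ) * iteratedDeriv 1 f z
                  = (-α * z - β) * iteratedDeriv 1 f z - α * ((1:ℕ):ℂ) * iteratedDeriv 0 f z
              push_cast
              ring
            · have hk1 : k - 1 + 1 = k := by omega
              rw [hk1, Nat.add_sub_cancel]
              push_cast
              ring

private lemma poly_rec (α β : ℂ) (γ : ℕ → ℂ)
    (hrec : ∀ k : ℕ, γ (k+1) = -β * γ k - α * k * γ (k-1)) (m : ℕ) :
    (∑ k ∈ Finset.range (m+3),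
        Polynomial.C (γ k / (k.factorial : ℂ)) * Polynomial.derivative^[k] (Polynomial.X ^ (m+2)))
      = (Polynomial.X - Polynomial.C β) *
          (∑ k ∈ Finset.range (m+2),
            Polynomial.C (γ k / (k.factorial : ℂ)) * Polynomial.derivative^[k] (Polynomial.X ^ (m+1)))
        - Polynomial.C (α * ((m : ℂ) + 1)) *
          (∑ k ∈ Finset.range (m+1),
            Polynomial.C (γ k / (k.factorial : ℂ)) * Polynomial.derivative^[k] (Polynomial.X ^ m)) := by
  set q : Polynomial ℂ := Polynomial.X ^ (m+1) with hq
  set A : Polynomial ℂ :=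
    ∑ k ∈ Finset.range (m+2), Polynomial.C (γ k / (k.factorial : ℂ)) * Polynomial.derivative^[k] q
    with hA
  set B : Polynomial ℂ :=
    ∑ k ∈ Finset.range (m+1),
      Polynomial.C (γ k / (k.factorial : ℂ)) * Polynomial.derivative^[k] (Polynomial.X ^ m)
    with hB
  have hXq : (Polynomial.X : Polynomial ℂ) ^ (m+2) = Polynomial.X * q := by
    rw [hq, ← pow_succ']
  have hfaczero : ∀ k : ℕ, ((k.factorial : ℂ)) ≠ 0 := fun k =>
    Nat.cast_ne_zero.mpr (Nat.factorial_ne_zero k)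
  have hscal' : ∀ k : ℕ, ((k+1 : ℕ) : ℂ) / (((k+1).factorial : ℕ) : ℂ) = 1 / (k.factorial : ℂ) := by
    intro k
    have h2 : ((k+1 : ℕ) : ℂ) ≠ 0 := Nat.cast_ne_zero.mpr (Nat.succ_ne_zero k)
    rw [Nat.factorial_succ]
    push_cast at h2 ⊢
    rw [div_eq_div_iff (by exact mul_ne_zero h2 (by exact_mod_cast hfaczero k)) (by exact_mod_cast hfaczero k)]
    ring
  have hscal : ∀ k : ℕ, γ (k+1) / ((k+1).factorial : ℂ) * ((k+1 : ℕ) : ℂ)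
      = γ (k+1) / (k.factorial : ℂ) := by
    intro k
    calc γ (k+1) / ((k+1).factorial : ℂ) * ((k+1 : ℕ) : ℂ)
        = γ (k+1) * (((k+1 : ℕ) : ℂ) / ((k+1).factorial : ℂ)) := by ring
      _ = γ (k+1) * (1 / (k.factorial : ℂ)) := by rw [hscal' k]
      _ = γ (k+1) / (k.factorial : ℂ) := by ring
  -- Leibniz rewriting of each term
  have key : ∀ k ∈ Finset.range (m+2),
      Polynomial.C (γ (k+1) / ((k+1).factorial : ℂ)) * Polynomial.derivative^[k+1] (Polynomial.X * q)
        = Polynomial.X * (Polynomial.C (γ (k+1) / ((k+1).factorial : ℂ)) * Polynomial.derivative^[k+1] q)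
          + Polynomial.C (γ (k+1) / (k.factorial : ℂ)) * Polynomial.derivative^[k] q := by
    intro k _
    rw [iterD_X_mul, mul_add]
    congr 1
    · ring
    · rw [nsmul_eq_mul, ← Polynomial.C_eq_natCast, ← mul_assoc, ← Polynomial.C_mul, hscal]
  -- step 1 : expand the big sum
  have step1 : (∑ k ∈ Finset.range (m+3),
      Polynomial.C (γ k / (k.factorial : ℂ)) * Polynomial.derivative^[k] (Polynomial.X ^ (m+2)))
      = Polynomial.X * (∑ k ∈ Finset.range (m+3),
            Polynomial.C (γ k / (k.factorial : ℂ)) * Polynomial.derivative^[k] q)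
        + ∑ k ∈ Finset.range (m+2),
            Polynomial.C (γ (k+1) / (k.factorial : ℂ)) * Polynomial.derivative^[k] q := by
    rw [hXq, Finset.sum_range_succ' _ (m+2), Finset.sum_congr rfl key,
      Finset.sum_add_distrib, ← Finset.mul_sum,
      Finset.sum_range_succ' (fun k => Polynomial.C (γ k / (k.factorial : ℂ))
        * Polynomial.derivative^[k] q) (m+2)]
    simp only [Function.iterate_zero_apply, Nat.factorial_zero, Nat.cast_one]
    ring
  -- the top term of the extended sum vanishes
  have step2 : (∑ k ∈ Finset.range (m+3),
      Polynomial.C (γ k / (k.factorial : ℂ)) * Polynomial.derivative^[k] q) = A := by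
    rw [Finset.sum_range_succ, hA]
    have : Polynomial.derivative^[m+2] q = 0 :=
      Polynomial.iterate_derivative_eq_zero (by
        rw [hq, Polynomial.natDegree_X_pow]; omega)
    rw [this, mul_zero, add_zero]
  -- rewrite the shifted sum using the recurrence
  have step3 : (∑ k ∈ Finset.range (m+2),
      Polynomial.C (γ (k+1) / (k.factorial : ℂ)) * Polynomial.derivative^[k] q)
      = Polynomial.C (-β) * A + Polynomial.C (-α) *
          ∑ k ∈ Finset.range (m+2),
            Polynomial.C ((k : ℂ) * γ (k-1) / (k.factorial : ℂ)) * Polynomial.derivative^[k] q := by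
    rw [Finset.mul_sum, Finset.mul_sum, ← Finset.sum_add_distrib]
    refine Finset.sum_congr rfl fun k _ => ?_
    rw [hrec k, ← mul_assoc, ← mul_assoc, ← Polynomial.C_mul, ← Polynomial.C_mul, ← add_mul,
      ← Polynomial.C_add]
    congr 2
    ring
  -- the remaining sum equals (m+1) * B
  have step4 : (∑ k ∈ Finset.range (m+2),
      Polynomial.C ((k : ℂ) * γ (k-1) / (k.factorial : ℂ)) * Polynomial.derivative^[k] q)
      = Polynomial.C (((m+1 : ℕ) : ℂ)) * B := by
    rw [Finset.sum_range_succ' _ (m+1)]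
    have h0 : Polynomial.C (((0:ℕ) : ℂ) * γ (0-1) / ((0).factorial : ℂ))
        * Polynomial.derivative^[0] q = 0 := by
      simp
    rw [h0, add_zero, hB, Finset.mul_sum]
    refine Finset.sum_congr rfl fun j _ => ?_
    have hd : Polynomial.derivative^[j+1] q = Polynomial.C (((m+1:ℕ)) : ℂ)
        * Polynomial.derivative^[j] (Polynomial.X ^ m) := by
      rw [Function.iterate_succ_apply, hq, Polynomial.derivative_X_pow,
        Nat.add_sub_cancel, Polynomial.iterate_derivative_C_mul]
    rw [hd]
    have hs : ((j+1 : ℕ) : ℂ) * γ (j+1-1) / ((j+1).factorial : ℂ) = γ j / (j.factorial : ℂ) := by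
      rw [Nat.add_sub_cancel, mul_comm, mul_div_assoc, hscal' j, mul_one_div]
    rw [hs]
    ring
  rw [step1, step2, step3, step4]
  have hc : Polynomial.C (α * ((m : ℂ) + 1))
      = - (Polynomial.C (-α) * Polynomial.C (((m+1:ℕ)) : ℂ)) := by
    rw [← Polynomial.C_mul, ← Polynomial.C_neg]
    congr 1
    push_cast
    ring
  rw [hc, Polynomial.C_neg]
  ring


/-- If `γ k` is the k-th derivative at 0 of `z ↦ γ₀ · exp(-(α/2)z² - βz)`
and `P n = ∑_{k=0}^n (γ k / k!) D^k[x^n]`, then `P 0 = γ₀`, `P 1 = (x - β)γ₀`, and for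
`n ≥ 2`, `P n = (x - β) P (n-1) - α(n-1) P (n-2)`. -/
theorem stmt_1 (α β γ₀ : ℂ) (hα : α ≠ 0) (hγ₀ : γ₀ ≠ 0) (γ : ℕ → ℂ)
    (hγ : ∀ k : ℕ, γ k =
      iteratedDeriv k (fun z : ℂ => γ₀ * Complex.exp (-(α / 2) * z ^ 2 - β * z)) 0)
    (P : ℕ → Polynomial ℂ)
    (hP : ∀ n : ℕ, P n = ∑ k ∈ Finset.range (n + 1),
      Polynomial.C (γ k / (k.factorial : ℂ)) * Polynomial.derivative^[k] (Polynomial.X ^ n)) :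
    P 0 = Polynomial.C γ₀ ∧
    P 1 = (Polynomial.X - Polynomial.C β) * Polynomial.C γ₀ ∧
    ∀ n : ℕ, 2 ≤ n →
      P n = (Polynomial.X - Polynomial.C β) * P (n - 1)
        - Polynomial.C (α * ((n : ℂ) - 1)) * P (n - 2) := by
  have hg0 : γ 0 = γ₀ := by
    rw [hγ 0, iteratedDeriv_zero]
    simp
  have hrec : ∀ k : ℕ, γ (k+1) = -β * γ k - α * k * γ (k-1) := by
    intro k
    rw [hγ (k+1), iter_rec α β γ₀ k]
    simp only []
    rw [← hγ k, ← hγ (k-1)]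
    ring
  have hg1 : γ 1 = -β * γ₀ := by
    have := hrec 0
    simpa [hg0] using this
  refine ⟨?_, ?_, ?_⟩
  · rw [hP 0]
    simp [hg0]
  · rw [hP 1, Finset.sum_range_succ, Finset.sum_range_one]
    simp only [Function.iterate_zero_apply, Function.iterate_one, pow_one,
      Polynomial.derivative_X, Nat.factorial_zero, Nat.factorial_one, Nat.cast_one, div_one,
      mul_one, hg0, hg1]
    rw [map_mul, map_neg]
    ring
  · intro n hn
    obtain ⟨m, rfl⟩ := Nat.exists_eq_add_of_le hn
    have e1 : 2 + m - 1 = m + 1 := by omega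
    have e2 : 2 + m - 2 = m := by omega
    rw [e1, e2, hP (2+m), hP (m+1), hP m,
      show 2 + m + 1 = m + 3 from by omega, show 2 + m = m + 2 from by omega,
      show ((m + 2 : ℕ) : ℂ) - 1 = (m : ℂ) + 1 from by push_cast; ring]
    exact poly_rec α β γ hrec m
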